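/- Let 0 < a < b, ρ > 0, α > 0, 0 ≤ γ < 1 and φ ∈ C_{γ,ρ}[a,b] with weighted bound M = max_{x∈[a,b]} |((x^ρ-a^ρ)/ρ)^γ φ(x)|. Then for all x ∈ (a,b], |(ρJ_{a+}^α φ)(x)| ≤ M · (Γ(1-γ)/Γ(α-γ+1)) · ((x^ρ-a^ρ)/ρ)^{α-γ}. -/

import Mathlib

open Real MeasureTheory Set Filter Topology

/-- Generalized (Katugampola) fractional integral; identity for `α = 0`. -/
noncomputable def igral (ρ α a : ℝ) (φ : ℝ → ℝ) (x : ℝ) : ℝ :=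
  if α = 0 then φ x
  else ρ ^ (1 - α) / Real.Gamma α * ∫ t in a..x, t ^ (ρ - 1) * φ t * (x ^ ρ - t ^ ρ) ^ (α - 1)

/-- Generalized (Katugampola) fractional derivative of order `α ∈ (0,1)`. -/
noncomputable def genD (ρ α a : ℝ) (φ : ℝ → ℝ) (x : ℝ) : ℝ :=
  x ^ (1 - ρ) * deriv (igral ρ (1 - α) a φ) x

/-- Hilfer–Katugampola fractional derivative of order `α` and type `β`. -/
noncomputable def hkD (ρ α β a : ℝ) (φ : ℝ → ℝ) : ℝ → ℝ :=
  igral ρ (β * (1 - α)) a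
    (fun s => s ^ (1 - ρ) * deriv (igral ρ ((1 - β) * (1 - α)) a φ) s)

/-- Membership in the weighted space `C_{γ,ρ}[a,b]`. -/
def MemW (ρ γ a b : ℝ) (φ : ℝ → ℝ) : Prop :=
  ∃ h : ℝ → ℝ, ContinuousOn h (Icc a b) ∧
    ∀ x ∈ Ioc a b, h x = ((x ^ ρ - a ^ ρ) / ρ) ^ γ * φ x

/-- Weighted sup-norm on `C_{γ,ρ}[a,b]`. -/
noncomputable def wnorm (ρ γ a b : ℝ) (φ : ℝ → ℝ) : ℝ :=
  sSup ((fun x => |((x ^ ρ - a ^ ρ) / ρ) ^ γ * φ x|) '' Ioc a b)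

open intervalIntegral

/-- Real Beta integral on `[0,1]`. -/
lemma myBeta01 {p q : ℝ} (hp : 0 < p) (hq : 0 < q) :
    ∫ u in (0:ℝ)..1, u ^ (p - 1) * (1 - u) ^ (q - 1)
      = Real.Gamma p * Real.Gamma q / Real.Gamma (p + q) := by
  have key := Complex.Gamma_mul_Gamma_eq_betaIntegral (s := (p : ℂ)) (t := (q : ℂ))
    (by simpa using hp) (by simpa using hq)
  have hbeta : Complex.betaIntegral (p : ℂ) (q : ℂ)
      = ((∫ u in (0:ℝ)..1, u ^ (p - 1) * (1 - u) ^ (q - 1) : ℝ) : ℂ) := by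
    rw [Complex.betaIntegral, ← intervalIntegral.integral_ofReal]
    refine intervalIntegral.integral_congr fun t ht => ?_
    rw [uIcc_of_le (by norm_num : (0:ℝ) ≤ 1)] at ht
    rw [Complex.ofReal_mul, Complex.ofReal_cpow ht.1, Complex.ofReal_cpow (by linarith [ht.2])]
    push_cast
    ring
  have key2 : Real.Gamma p * Real.Gamma q
      = Real.Gamma (p + q) * ∫ u in (0:ℝ)..1, u ^ (p - 1) * (1 - u) ^ (q - 1) := by
    rw [hbeta] at key
    rw [show ((p:ℂ) + q) = ((p + q : ℝ) : ℂ) by push_cast; ring] at key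
    rw [Complex.Gamma_ofReal, Complex.Gamma_ofReal, Complex.Gamma_ofReal] at key
    exact_mod_cast key
  have hΓ : Real.Gamma (p + q) ≠ 0 := (Real.Gamma_pos_of_pos (by linarith)).ne'
  rw [key2]
  field_simp

/-- Scaled real Beta integral on `[0,X]`. -/
lemma myBetaX {p q X : ℝ} (hp : 0 < p) (hq : 0 < q) (hX : 0 < X) :
    ∫ u in (0:ℝ)..X, u ^ (p - 1) * (X - u) ^ (q - 1)
      = X ^ (p + q - 1) * (Real.Gamma p * Real.Gamma q / Real.Gamma (p + q)) := by
  have h := intervalIntegral.smul_integral_comp_mul_left (a := (0:ℝ)) (b := 1)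
    (f := fun u => u ^ (p - 1) * (X - u) ^ (q - 1)) X
  simp only [mul_zero, mul_one, smul_eq_mul] at h
  rw [← h]
  have h2 : ∫ v in (0:ℝ)..1, (X * v) ^ (p - 1) * (X - X * v) ^ (q - 1)
      = X ^ (p - 1) * X ^ (q - 1) * ∫ v in (0:ℝ)..1, v ^ (p - 1) * (1 - v) ^ (q - 1) := by
    rw [← intervalIntegral.integral_const_mul]
    refine intervalIntegral.integral_congr fun v hv => ?_
    rw [uIcc_of_le zero_le_one] at hv
    rw [show X - X * v = X * (1 - v) by ring, Real.mul_rpow hX.le hv.1,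
      Real.mul_rpow hX.le (by linarith [hv.2])]
    ring
  rw [h2, myBeta01 hp hq]
  have hpow : X * (X ^ (p - 1) * X ^ (q - 1)) = X ^ (p + q - 1) := by
    rw [← Real.rpow_add hX]
    nth_rewrite 1 [← Real.rpow_one X]
    rw [← Real.rpow_add hX]
    ring_nf
  rw [← hpow]
  ring

/-- Beta-type integrand is integrable on `[0,X]`. -/
lemma myBetaInt {p q X : ℝ} (hp : 0 < p) (hq : 0 < q) (hX : 0 < X) :
    IntegrableOn (fun u : ℝ => u ^ (p - 1) * (X - u) ^ (q - 1)) (Icc 0 X) := by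
  have hhalf : (0:ℝ) < X / 2 := by linarith
  have h1 : IntegrableOn (fun u : ℝ => u ^ (p - 1)) (Icc 0 (X / 2)) := by
    rw [integrableOn_Icc_iff_integrableOn_Ioc]
    exact (intervalIntegrable_iff_integrableOn_Ioc_of_le (by linarith)).mp
      (intervalIntegral.intervalIntegrable_rpow' (by linarith))
  have c1 : ContinuousOn (fun u : ℝ => (X - u) ^ (q - 1)) (Icc 0 (X / 2)) := by
    refine ContinuousOn.rpow_const (by fun_prop) fun u hu => Or.inl ?_
    have := hu.2
    intro hc
    have : X - u ≥ X / 2 := by linarith [hu.2]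
    linarith
  have h1' : IntegrableOn (fun u : ℝ => u ^ (p - 1) * (X - u) ^ (q - 1)) (Icc 0 (X / 2)) :=
    h1.mul_continuousOn c1 isCompact_Icc
  have h2 : IntegrableOn (fun u : ℝ => (X - u) ^ (q - 1)) (Icc (X / 2) X) := by
    have := (intervalIntegral.intervalIntegrable_rpow' (show (-1:ℝ) < q - 1 by linarith)
      (a := 0) (b := X / 2)).comp_sub_left X
    simp only [sub_zero] at this
    rw [show X - X / 2 = X / 2 by ring] at this
    rw [integrableOn_Icc_iff_integrableOn_Ioc]
    exact (intervalIntegrable_iff_integrableOn_Ioc_of_le (by linarith)).mp this.symm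
  have c2 : ContinuousOn (fun u : ℝ => u ^ (p - 1)) (Icc (X / 2) X) := by
    refine ContinuousOn.rpow_const (by fun_prop) fun u hu => Or.inl ?_
    intro hc
    have := hu.1
    linarith [hu.1]
  have h2' : IntegrableOn (fun u : ℝ => u ^ (p - 1) * (X - u) ^ (q - 1)) (Icc (X / 2) X) :=
    IntegrableOn.continuousOn_mul c2 h2 isCompact_Icc
  have := h1'.union h2'
  rwa [Icc_union_Icc_eq_Icc (by linarith) (by linarith)] at this

/-- Substitution `u = (t^ρ - a^ρ)/ρ` : integrability and value of the weighted kernel integral. -/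
lemma mySubst {ρ a x γ α : ℝ} (ha : 0 < a) (hax : a < x) (hρ : 0 < ρ) (hα : 0 < α)
    (hγ1 : γ < 1) :
    IntegrableOn (fun t : ℝ => t ^ (ρ - 1) *
        (((t ^ ρ - a ^ ρ) / ρ) ^ (-γ) * (x ^ ρ - t ^ ρ) ^ (α - 1))) (Ioo a x) ∧
      ∫ t in Ioo a x, t ^ (ρ - 1) *
          (((t ^ ρ - a ^ ρ) / ρ) ^ (-γ) * (x ^ ρ - t ^ ρ) ^ (α - 1))
        = ρ ^ (α - 1) * (((x ^ ρ - a ^ ρ) / ρ) ^ (α - γ) *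
            (Real.Gamma (1 - γ) * Real.Gamma α / Real.Gamma (1 - γ + α))) := by
  set X : ℝ := (x ^ ρ - a ^ ρ) / ρ with hXdef
  have hax' : a ^ ρ < x ^ ρ := Real.rpow_lt_rpow ha.le hax hρ
  have hX : 0 < X := div_pos (by linarith) hρ
  set f : ℝ → ℝ := fun t => (t ^ ρ - a ^ ρ) / ρ with hfdef
  set G : ℝ → ℝ := fun u => u ^ (-γ) * (ρ * (X - u)) ^ (α - 1) with hGdef
  have hderiv : ∀ t ∈ Ioo a x, HasDerivWithinAt f (t ^ (ρ - 1)) (Ioo a x) t := by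
    intro t ht
    have h0 : (0:ℝ) < t := lt_trans ha ht.1
    have : HasDerivAt (fun t : ℝ => (t ^ ρ - a ^ ρ) / ρ) (ρ * t ^ (ρ - 1) / ρ) t :=
      (((Real.hasDerivAt_rpow_const (Or.inl h0.ne'))).sub_const (a ^ ρ)).div_const ρ
    rw [show ρ * t ^ (ρ - 1) / ρ = t ^ (ρ - 1) from by field_simp] at this
    exact this.hasDerivWithinAt
  have hmono : ∀ s t : ℝ, a ≤ s → s < t → f s < f t := by
    intro s t hs hst
    have : s ^ ρ < t ^ ρ := Real.rpow_lt_rpow (le_trans ha.le hs) hst hρ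
    simp only [hfdef]
    gcongr
  have hinj : InjOn f (Ioo a x) := by
    intro s hs t ht hst
    rcases lt_trichotomy s t with hc | hc | hc
    · exact absurd hst (hmono s t hs.1.le hc).ne
    · exact hc
    · exact absurd hst.symm (hmono t s ht.1.le hc).ne
  have hfc : ContinuousOn f (Icc a x) := by
    intro t ht
    have h0 : (0:ℝ) < t := lt_of_lt_of_le ha ht.1
    exact (((Real.continuousAt_rpow_const t ρ (Or.inl h0.ne')).sub
      continuousAt_const).div_const ρ).continuousWithinAt
  have hfa : f a = 0 := by simp [hfdef]
  have hfx : f x = X := rfl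
  have himg : f '' Ioo a x = Ioo 0 X := by
    apply Subset.antisymm
    · rintro _ ⟨t, ht, rfl⟩
      have h1 : a ^ ρ < t ^ ρ := Real.rpow_lt_rpow ha.le ht.1 hρ
      have h2 : t ^ ρ < x ^ ρ := Real.rpow_lt_rpow (lt_trans ha ht.1).le ht.2 hρ
      exact ⟨div_pos (by linarith) hρ, by simp only [hfdef, hXdef]; gcongr⟩
    · have := intermediate_value_Ioo hax.le hfc
      rwa [hfa, hfx] at this
  have hGeq : ∀ u ∈ Icc (0:ℝ) X, G u
      = ρ ^ (α - 1) * (u ^ (1 - γ - 1) * (X - u) ^ (α - 1)) := by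
    intro u hu
    simp only [hGdef]
    rw [Real.mul_rpow hρ.le (by linarith [hu.2])]
    rw [show (1:ℝ) - γ - 1 = -γ by ring]
    ring
  have hGI : IntegrableOn G (Ioo 0 X) := by
    have base := (myBetaInt (p := 1 - γ) (q := α) (by linarith) hα hX).const_mul (ρ ^ (α - 1))
    exact (MeasureTheory.IntegrableOn.congr_fun base (fun u hu => (hGeq u hu).symm) measurableSet_Icc).mono_set
      Ioo_subset_Icc_self
  have hiff := integrableOn_image_iff_integrableOn_abs_deriv_smul measurableSet_Ioo hderiv hinj G
  rw [himg] at hiff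
  have eqF : ∀ t ∈ Ioo a x, |t ^ (ρ - 1)| • G (f t)
      = t ^ (ρ - 1) * (((t ^ ρ - a ^ ρ) / ρ) ^ (-γ) * (x ^ ρ - t ^ ρ) ^ (α - 1)) := by
    intro t ht
    have h0 : (0:ℝ) < t := lt_trans ha ht.1
    have hr : ρ * (X - f t) = x ^ ρ - t ^ ρ := by
      simp only [hfdef, hXdef]; field_simp
      ring
    simp only [hGdef, smul_eq_mul, hr, abs_of_nonneg (Real.rpow_nonneg h0.le _)]
    rfl
  constructor
  · exact MeasureTheory.IntegrableOn.congr_fun (hiff.mp hGI) eqF measurableSet_Ioo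
  · have hval := integral_image_eq_integral_abs_deriv_smul measurableSet_Ioo hderiv hinj G
    rw [himg] at hval
    have : ∫ t in Ioo a x, t ^ (ρ - 1) *
        (((t ^ ρ - a ^ ρ) / ρ) ^ (-γ) * (x ^ ρ - t ^ ρ) ^ (α - 1)) = ∫ u in Ioo 0 X, G u := by
      rw [hval]
      exact (setIntegral_congr_fun measurableSet_Ioo eqF).symm
    rw [this, ← integral_Ioc_eq_integral_Ioo,
      ← intervalIntegral.integral_of_le hX.le]
    have : ∫ u in (0:ℝ)..X, G u
        = ρ ^ (α - 1) * ∫ u in (0:ℝ)..X, u ^ (1 - γ - 1) * (X - u) ^ (α - 1) := by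
      rw [← intervalIntegral.integral_const_mul]
      refine intervalIntegral.integral_congr fun u hu => ?_
      rw [uIcc_of_le hX.le] at hu
      exact hGeq u hu
    rw [this, myBetaX (by linarith) hα hX, show (1:ℝ) - γ + α - 1 = α - γ by ring]

/-- Weighted bound for the generalized fractional integral. -/
theorem igral_le_bound (ρ a b α γ M : ℝ) (φ h : ℝ → ℝ) (ha : 0 < a) (hab : a < b)
    (hρ : 0 < ρ) (hα : 0 < α) (hγ0 : 0 ≤ γ) (hγ1 : γ < 1)
    (hcont : ContinuousOn h (Icc a b))
    (hh : ∀ x ∈ Ioc a b, h x = ((x ^ ρ - a ^ ρ) / ρ) ^ γ * φ x)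
    (hM : M = sSup ((fun x => |h x|) '' Icc a b)) :
    ∀ x ∈ Ioc a b, |igral ρ α a φ x| ≤
      M * (Real.Gamma (1 - γ) / Real.Gamma (α - γ + 1)) *
        ((x ^ ρ - a ^ ρ) / ρ) ^ (α - γ) := by
  intro x hx
  obtain ⟨hax, hxb⟩ := hx
  set X : ℝ := (x ^ ρ - a ^ ρ) / ρ with hXdef
  have hax' : a ^ ρ < x ^ ρ := Real.rpow_lt_rpow ha.le hax hρ
  have hX : 0 < X := div_pos (by linarith) hρ
  obtain ⟨hFint, hFval⟩ := mySubst (γ := γ) ha hax hρ hα hγ1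
  -- bound on |h|
  have hMb : ∀ t ∈ Icc a b, |h t| ≤ M := by
    intro t ht
    rw [hM]
    exact le_csSup (isCompact_Icc.image_of_continuousOn
      (continuous_abs.comp_continuousOn hcont)).bddAbove ⟨t, ht, rfl⟩
  have hM0 : 0 ≤ M := le_trans (abs_nonneg (h b)) (hMb b ⟨hab.le, le_refl b⟩)
  -- interval integrability of the dominating function
  have hgint : IntervalIntegrable (fun t : ℝ => M * (t ^ (ρ - 1) *
      (((t ^ ρ - a ^ ρ) / ρ) ^ (-γ) * (x ^ ρ - t ^ ρ) ^ (α - 1)))) volume a x := by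
    rw [intervalIntegrable_iff_integrableOn_Ioo_of_le hax.le]
    exact hFint.const_mul M
  -- pointwise bound
  have hae : ∀ᵐ t ∂volume.restrict (Set.uIoc a x),
      ‖t ^ (ρ - 1) * φ t * (x ^ ρ - t ^ ρ) ^ (α - 1)‖ ≤ M * (t ^ (ρ - 1) *
        (((t ^ ρ - a ^ ρ) / ρ) ^ (-γ) * (x ^ ρ - t ^ ρ) ^ (α - 1))) := by
    rw [uIoc_of_le hax.le]
    filter_upwards [ae_restrict_mem measurableSet_Ioc] with t ht
    have h0 : (0:ℝ) < t := lt_trans ha ht.1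
    have hw : 0 < (t ^ ρ - a ^ ρ) / ρ :=
      div_pos (by have := Real.rpow_lt_rpow ha.le ht.1 hρ; linarith) hρ
    have hxt : 0 ≤ x ^ ρ - t ^ ρ := by
      have : t ^ ρ ≤ x ^ ρ := Real.rpow_le_rpow h0.le ht.2 hρ.le
      linarith
    have hphi : φ t = ((t ^ ρ - a ^ ρ) / ρ) ^ (-γ) * h t := by
      rw [hh t ⟨ht.1, le_trans ht.2 hxb⟩, Real.rpow_neg hw.le, ← mul_assoc,
        inv_mul_cancel₀ (Real.rpow_pos_of_pos hw γ).ne', one_mul]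
    rw [Real.norm_eq_abs]
    calc |t ^ (ρ - 1) * φ t * (x ^ ρ - t ^ ρ) ^ (α - 1)|
        = t ^ (ρ - 1) * (((t ^ ρ - a ^ ρ) / ρ) ^ (-γ) * |h t|
            * (x ^ ρ - t ^ ρ) ^ (α - 1)) := by
          rw [hphi, abs_mul, abs_mul, abs_mul,
            abs_of_nonneg (Real.rpow_nonneg h0.le _),
            abs_of_nonneg (Real.rpow_nonneg hw.le _),
            abs_of_nonneg (Real.rpow_nonneg hxt _)]
          ring
      _ ≤ t ^ (ρ - 1) * (((t ^ ρ - a ^ ρ) / ρ) ^ (-γ) * M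
            * (x ^ ρ - t ^ ρ) ^ (α - 1)) := by
          gcongr
          all_goals first
            | exact hMb t ⟨ht.1.le, le_trans ht.2 hxb⟩
            | exact Real.rpow_nonneg h0.le _
            | exact Real.rpow_nonneg hw.le _
            | exact Real.rpow_nonneg hxt _
      _ = M * (t ^ (ρ - 1) * (((t ^ ρ - a ^ ρ) / ρ) ^ (-γ)
            * (x ^ ρ - t ^ ρ) ^ (α - 1))) := by ring
  have hnorm := intervalIntegral.norm_integral_le_abs_of_norm_le hae hgint
  -- compute the dominating integral
  have hgval : ∫ t in a..x, M * (t ^ (ρ - 1) *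
      (((t ^ ρ - a ^ ρ) / ρ) ^ (-γ) * (x ^ ρ - t ^ ρ) ^ (α - 1)))
      = M * (ρ ^ (α - 1) * (X ^ (α - γ) *
          (Real.Gamma (1 - γ) * Real.Gamma α / Real.Gamma (1 - γ + α)))) := by
    rw [intervalIntegral.integral_const_mul, intervalIntegral.integral_of_le hax.le,
      integral_Ioc_eq_integral_Ioo, hFval]
  have hΓα : 0 < Real.Gamma α := Real.Gamma_pos_of_pos hα
  have hΓ1 : 0 < Real.Gamma (1 - γ) := Real.Gamma_pos_of_pos (by linarith)
  have hΓ2 : 0 < Real.Gamma (α - γ + 1) := Real.Gamma_pos_of_pos (by linarith)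
  have hV : 0 ≤ M * (ρ ^ (α - 1) * (X ^ (α - γ) *
      (Real.Gamma (1 - γ) * Real.Gamma α / Real.Gamma (1 - γ + α)))) := by
    have : 0 < Real.Gamma (1 - γ + α) := Real.Gamma_pos_of_pos (by linarith)
    positivity
  rw [hgval, abs_of_nonneg hV] at hnorm
  have hcpos : 0 < ρ ^ ((1:ℝ) - α) / Real.Gamma α :=
    div_pos (Real.rpow_pos_of_pos hρ _) hΓα
  have higral : igral ρ α a φ x = ρ ^ (1 - α) / Real.Gamma α *
      ∫ t in a..x, t ^ (ρ - 1) * φ t * (x ^ ρ - t ^ ρ) ^ (α - 1) := by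
    rw [igral, if_neg hα.ne']
  rw [higral, abs_mul, abs_of_pos hcpos]
  calc ρ ^ (1 - α) / Real.Gamma α *
        |∫ t in a..x, t ^ (ρ - 1) * φ t * (x ^ ρ - t ^ ρ) ^ (α - 1)|
      ≤ ρ ^ (1 - α) / Real.Gamma α * (M * (ρ ^ (α - 1) * (X ^ (α - γ) *
          (Real.Gamma (1 - γ) * Real.Gamma α / Real.Gamma (1 - γ + α))))) := by
        exact mul_le_mul_of_nonneg_left hnorm hcpos.le
    _ = M * (Real.Gamma (1 - γ) / Real.Gamma (α - γ + 1)) * X ^ (α - γ) := by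
        have hρρ : ρ ^ ((1:ℝ) - α) * ρ ^ (α - 1) = 1 := by
          rw [← Real.rpow_add hρ]; norm_num
        rw [show (1:ℝ) - γ + α = α - γ + 1 by ring]
        field_simp
        linear_combination M * hρρ
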